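/- arXiv:1902.01027 — 6 statements merged into one kernel-verified Lean document; each statement's English description precedes it below -/
import Mathlib

section
/- Suppose integers a₂, a₃, a₂', a₃', c, with a ≥ 1, satisfy c(8a−4) = −a₂ + a₂'(−2a+1) + a₃'(−2a) and c(8a+4) = a₃ + a₂'(−2a) + a₃'(−2a−1), where a₂, a₃, a₂', a₃' ≥ 0. Then a₂ = a₃ = a₂' = a₃' = 0 and c = 0. -/
/-- Key arithmetic lemma in the non-projectivity proof for X₀(a): if nonnegative
integers a₂, a₃, a₂', a₃' and an integer c satisfy the two displayed equations,
then all of them vanish. -/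
theorem stmt_9 (a a2 a3 a2' a3' c : ℤ) (ha : 1 ≤ a)
    (h2 : 0 ≤ a2) (h3 : 0 ≤ a3) (h2' : 0 ≤ a2') (h3' : 0 ≤ a3')
    (e1 : c * (8 * a - 4) = -a2 + a2' * (-2 * a + 1) + a3' * (-2 * a))
    (e2 : c * (8 * a + 4) = a3 + a2' * (-2 * a) + a3' * (-2 * a - 1)) :
    a2 = 0 ∧ a3 = 0 ∧ a2' = 0 ∧ a3' = 0 ∧ c = 0 := by
  have ha1 : (0:ℤ) ≤ 2 * a - 1 := by linarith
  have ha2 : (0:ℤ) ≤ 2 * a := by linarith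
  -- 8c = a2 + a3 - a2' - a3'
  have hkey : 8 * c = a2 + a3 - a2' - a3' := by linarith
  have hc0 : c ≤ 0 := by
    nlinarith [mul_nonneg h2' ha1, mul_nonneg h3' ha2]
  have hc : c = 0 := by
    nlinarith [mul_nonneg h2' ha1, mul_nonneg h3' ha2,
      mul_nonneg (mul_nonneg h2 ha1) ha1, mul_nonneg (mul_nonneg h3 ha1) ha1,
      mul_nonneg h3' ha1, mul_nonpos_of_nonpos_of_nonneg hc0 ha1]
  subst hc
  have h2'0 : a2' = 0 := by nlinarith [mul_nonneg h2' ha1, mul_nonneg h3' ha2]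
  have h3'0 : a3' = 0 := by nlinarith [mul_nonneg h2' ha1, mul_nonneg h3' ha2]
  refine ⟨by nlinarith [mul_nonneg h2' ha1, mul_nonneg h3' ha2], by linarith, h2'0, h3'0, rfl⟩
end

section
/- Let R1 → R̄ and R2 → R̄ be surjective ring homomorphisms of commutative rings, and R = R1 ×_{R̄} R2 the fiber product. For f = (f1, f2) ∈ R with common image f̄ ∈ R̄, the localization R_f is isomorphic to (R1)_{f1} ×_{R̄_{f̄}} (R2)_{f2}. -/
/-- The fiber product `R₁ ×_{R̄} R₂` of two ring maps, as a subring of `R₁ × R₂`. -/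
def ringFiberProduct {A B C : Type*} [CommRing A] [CommRing B] [CommRing C]
    (g1 : A →+* C) (g2 : B →+* C) : Subring (A × B) :=
  (g1.comp (RingHom.fst A B)).eqLocus (g2.comp (RingHom.snd A B))

set_option maxHeartbeats 1000000 in
theorem aux10 {A B C : Type*} [CommRing A] [CommRing B] [CommRing C]
    (g1 : A →+* C) (g2 : B →+* C)
    (f : ringFiberProduct g1 g2) (c : C)
    (h1 : g1 (f : A × B).1 = c) (h2 : g2 (f : A × B).2 = c)
    (φ : Localization.Away (f : A × B).1 →+* Localization.Away c)
    (ψ : Localization.Away (f : A × B).2 →+* Localization.Away c)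
    (hφ : ∀ a, φ (algebraMap A (Localization.Away (f : A × B).1) a)
        = algebraMap C (Localization.Away c) (g1 a))
    (hψ : ∀ b, ψ (algebraMap B (Localization.Away (f : A × B).2) b)
        = algebraMap C (Localization.Away c) (g2 b)) :
    Nonempty (Localization.Away f ≃+*
      (φ.comp (RingHom.fst (Localization.Away (f : A × B).1) (Localization.Away (f : A × B).2))).eqLocus
        (ψ.comp (RingHom.snd (Localization.Away (f : A × B).1) (Localization.Away (f : A × B).2)))) := by
  obtain ⟨⟨f1, f2⟩, hmem⟩ := f
  dsimp only at h1 h2 φ ψ hφ hψ ⊢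
  set R := ringFiberProduct g1 g2 with hR
  set fR : R := ⟨(f1, f2), hmem⟩ with hfR
  
  
  set T : Subring ((Localization.Away f1) × (Localization.Away f2)) := (φ.comp (RingHom.fst (Localization.Away f1) (Localization.Away f2))).eqLocus (ψ.comp (RingHom.snd (Localization.Away f1) (Localization.Away f2))) with hT
  let ρ₀ : R →+* (Localization.Away f1) × (Localization.Away f2) :=
    ((algebraMap A (Localization.Away f1)).prodMap (algebraMap B (Localization.Away f2))).comp (Subring.subtype R)
  have hρ₀ : ∀ r : R, ρ₀ r ∈ T := by
    intro r
    show φ (algebraMap A (Localization.Away f1) (r : A × B).1) = ψ (algebraMap B (Localization.Away f2) (r : A × B).2)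
    rw [hφ, hψ]
    exact congrArg _ (r.2 : g1 (r : A × B).1 = g2 (r : A × B).2)
  let ρ : R →+* T := ρ₀.codRestrict T hρ₀
  letI : Algebra R T := ρ.toAlgebra
  -- the inverse of ρ f
  have hmemT : (IsLocalization.Away.invSelf (S := (Localization.Away f1)) f1,
      IsLocalization.Away.invSelf (S := (Localization.Away f2)) f2) ∈ T := by
    show φ (IsLocalization.Away.invSelf f1) = ψ (IsLocalization.Away.invSelf f2)
    have e1 : φ (IsLocalization.Away.invSelf f1) * algebraMap C (Localization.Away c) c = 1 := by
      have hc : algebraMap C (Localization.Away c) c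
          = φ (algebraMap A (Localization.Away f1) f1) := by rw [hφ, h1]
      rw [hc, ← map_mul, mul_comm (IsLocalization.Away.invSelf f1),
        IsLocalization.Away.mul_invSelf, map_one]
    have e2 : ψ (IsLocalization.Away.invSelf f2) * algebraMap C (Localization.Away c) c = 1 := by
      have hc : algebraMap C (Localization.Away c) c
          = ψ (algebraMap B (Localization.Away f2) f2) := by rw [hψ, h2]
      rw [hc, ← map_mul, mul_comm (IsLocalization.Away.invSelf f2),
        IsLocalization.Away.mul_invSelf, map_one]
    calc φ (IsLocalization.Away.invSelf f1)
        = φ (IsLocalization.Away.invSelf f1) *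
            (algebraMap C (Localization.Away c) c * ψ (IsLocalization.Away.invSelf f2)) := by
          rw [mul_comm (algebraMap C (Localization.Away c) c), e2, mul_one]
      _ = (φ (IsLocalization.Away.invSelf f1) * algebraMap C (Localization.Away c) c) *
            ψ (IsLocalization.Away.invSelf f2) := by ring
      _ = ψ (IsLocalization.Away.invSelf f2) := by rw [e1, one_mul]
  have hunit : IsUnit (ρ fR) := by
    refine IsUnit.of_mul_eq_one ⟨_, hmemT⟩ ?_
    refine Subtype.ext (Prod.ext ?_ ?_)
    · exact IsLocalization.Away.mul_invSelf f1
    · exact IsLocalization.Away.mul_invSelf f2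
  have coe_pow : ∀ (n : ℕ), ((fR ^ n : R) : A × B).1 = f1 ^ n ∧ ((fR ^ n : R) : A × B).2 = f2 ^ n := by
    intro n
    constructor <;> simp [hfR]
  haveI : IsLocalization (Submonoid.powers fR) T := by
    constructor
    constructor
    · rintro ⟨y, n, rfl⟩
      show IsUnit (ρ (fR ^ n))
      rw [map_pow]
      exact hunit.pow n
    · rintro ⟨⟨x1, x2⟩, hz⟩
      replace hz : φ x1 = ψ x2 := hz
      obtain ⟨⟨r1, s1⟩, hr1⟩ := IsLocalization.surj (Submonoid.powers f1) x1
      obtain ⟨n1, hn1⟩ := s1.2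
      replace hn1 : f1 ^ n1 = (s1 : A) := hn1
      obtain ⟨⟨r2, s2⟩, hr2⟩ := IsLocalization.surj (Submonoid.powers f2) x2
      obtain ⟨n2, hn2⟩ := s2.2
      replace hn2 : f2 ^ n2 = (s2 : B) := hn2
      set N := n1 + n2 with hN
      set r1' := r1 * f1 ^ n2 with hr1'
      set r2' := r2 * f2 ^ n1 with hr2'
      have e1 : x1 * algebraMap A (Localization.Away f1) (f1 ^ N) = algebraMap A (Localization.Away f1) r1' := by
        rw [hN, pow_add, map_mul, ← mul_assoc, hn1, hr1, ← map_mul]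
      have e2 : x2 * algebraMap B (Localization.Away f2) (f2 ^ N) = algebraMap B (Localization.Away f2) r2' := by
        rw [hN, add_comm n1 n2, pow_add, map_mul, ← mul_assoc, hn2, hr2, ← map_mul]
      have key1 : φ x1 * algebraMap C (Localization.Away c) (c ^ N)
          = algebraMap C (Localization.Away c) (g1 r1') := by
        have hc : algebraMap C (Localization.Away c) (c ^ N) = φ (algebraMap A (Localization.Away f1) (f1 ^ N)) := by
          rw [hφ, map_pow g1, h1]
        rw [hc, ← map_mul, e1, hφ]
      have key2 : ψ x2 * algebraMap C (Localization.Away c) (c ^ N)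
          = algebraMap C (Localization.Away c) (g2 r2') := by
        have hc : algebraMap C (Localization.Away c) (c ^ N) = ψ (algebraMap B (Localization.Away f2) (f2 ^ N)) := by
          rw [hψ, map_pow g2, h2]
        rw [hc, ← map_mul, e2, hψ]
      have heq : algebraMap C (Localization.Away c) (g1 r1')
          = algebraMap C (Localization.Away c) (g2 r2') := by
        rw [← key1, ← key2, hz]
      obtain ⟨⟨m, k, hk⟩, hm⟩ := (IsLocalization.eq_iff_exists (Submonoid.powers c) _).mp heq
      have hm' : c ^ k * g1 r1' = c ^ k * g2 r2' := by
        have hk' : c ^ k = m := hk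
        rw [hk']; simpa using hm
      clear_value N r1' r2'
      have hrrmem : (f1 ^ k * r1', f2 ^ k * r2') ∈ R := by
        show g1 (f1 ^ k * r1') = g2 (f2 ^ k * r2')
        rw [map_mul, map_mul, map_pow, map_pow, h1, h2]
        exact hm'
      refine ⟨⟨⟨_, hrrmem⟩, ⟨fR ^ (N + k), N + k, rfl⟩⟩, ?_⟩
      refine Subtype.ext (Prod.ext ?_ ?_)
      · show x1 * algebraMap A (Localization.Away f1) ((fR ^ (N + k) : R) : A × B).1
            = algebraMap A (Localization.Away f1) (f1 ^ k * r1')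
        rw [(coe_pow (N + k)).1]
        calc x1 * algebraMap A (Localization.Away f1) (f1 ^ (N + k))
            = (x1 * algebraMap A (Localization.Away f1) (f1 ^ N)) * algebraMap A (Localization.Away f1) (f1 ^ k) := by
              rw [pow_add, map_mul, mul_assoc]
          _ = algebraMap A (Localization.Away f1) r1' * algebraMap A (Localization.Away f1) (f1 ^ k) := by rw [e1]
          _ = algebraMap A (Localization.Away f1) (f1 ^ k * r1') := by rw [← map_mul, mul_comm]
      · show x2 * algebraMap B (Localization.Away f2) ((fR ^ (N + k) : R) : A × B).2
            = algebraMap B (Localization.Away f2) (f2 ^ k * r2')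
        rw [(coe_pow (N + k)).2]
        calc x2 * algebraMap B (Localization.Away f2) (f2 ^ (N + k))
            = (x2 * algebraMap B (Localization.Away f2) (f2 ^ N)) * algebraMap B (Localization.Away f2) (f2 ^ k) := by
              rw [pow_add, map_mul, mul_assoc]
          _ = algebraMap B (Localization.Away f2) r2' * algebraMap B (Localization.Away f2) (f2 ^ k) := by rw [e2]
          _ = algebraMap B (Localization.Away f2) (f2 ^ k * r2') := by rw [← map_mul, mul_comm]
    · intro a b h
      have h' : ρ₀ a = ρ₀ b := congrArg Subtype.val h
      have ha1 : algebraMap A (Localization.Away f1) (a : A × B).1 = algebraMap A (Localization.Away f1) (b : A × B).1 :=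
        congrArg Prod.fst h'
      have ha2 : algebraMap B (Localization.Away f2) (a : A × B).2 = algebraMap B (Localization.Away f2) (b : A × B).2 :=
        congrArg Prod.snd h'
      obtain ⟨⟨m1, k1, hk1⟩, hm1⟩ := (IsLocalization.eq_iff_exists (Submonoid.powers f1) _).mp ha1
      obtain ⟨⟨m2, k2, hk2⟩, hm2⟩ := (IsLocalization.eq_iff_exists (Submonoid.powers f2) _).mp ha2
      have hm1' : f1 ^ k1 * (a : A × B).1 = f1 ^ k1 * (b : A × B).1 := by
        have hk1' : f1 ^ k1 = m1 := hk1
        rw [hk1']; simpa using hm1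
      have hm2' : f2 ^ k2 * (a : A × B).2 = f2 ^ k2 * (b : A × B).2 := by
        have hk2' : f2 ^ k2 = m2 := hk2
        rw [hk2']; simpa using hm2
      refine ⟨⟨fR ^ (k1 + k2), k1 + k2, rfl⟩, ?_⟩
      refine Subtype.ext (Prod.ext ?_ ?_)
      · show ((fR ^ (k1 + k2) : R) : A × B).1 * (a : A × B).1
            = ((fR ^ (k1 + k2) : R) : A × B).1 * (b : A × B).1
        rw [(coe_pow (k1 + k2)).1]
        calc f1 ^ (k1 + k2) * (a : A × B).1 = f1 ^ k2 * (f1 ^ k1 * (a : A × B).1) := by ring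
          _ = f1 ^ k2 * (f1 ^ k1 * (b : A × B).1) := by rw [hm1']
          _ = f1 ^ (k1 + k2) * (b : A × B).1 := by ring
      · show ((fR ^ (k1 + k2) : R) : A × B).2 * (a : A × B).2
            = ((fR ^ (k1 + k2) : R) : A × B).2 * (b : A × B).2
        rw [(coe_pow (k1 + k2)).2]
        calc f2 ^ (k1 + k2) * (a : A × B).2 = f2 ^ k1 * (f2 ^ k2 * (a : A × B).2) := by ring
          _ = f2 ^ k1 * (f2 ^ k2 * (b : A × B).2) := by rw [hm2']
          _ = f2 ^ (k1 + k2) * (b : A × B).2 := by ring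
  exact ⟨(IsLocalization.algEquiv (Submonoid.powers fR) (Localization.Away fR) T).toRingEquiv⟩


lemma cast_apply {C : Type*} [CommRing C] {c d : C} (h : c = d) {X : Type*} [Semiring X]
    (ψ : X →+* Localization.Away c) (x : X) :
    (h ▸ ψ : X →+* Localization.Away d) x = h ▸ (ψ x) := by subst h; rfl

lemma cast_algebraMap {C : Type*} [CommRing C] {c d : C} (h : c = d) (z : C) :
    (h ▸ (algebraMap C (Localization.Away c) z) : Localization.Away d)
      = algebraMap C (Localization.Away d) z := by subst h; rfl

lemma awayMap_algebraMap {B C : Type*} [CommRing B] [CommRing C] (g2 : B →+* C) (r : B) (b : B) :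
    Localization.awayMap g2 r (algebraMap B (Localization.Away r) b)
      = algebraMap C (Localization.Away (g2 r)) (g2 b) := by
  simp [Localization.awayMap, IsLocalization.Away.map, IsLocalization.map_eq]


/-- For surjections `g1 : R₁ → R̄`, `g2 : R₂ → R̄` and `f = (f₁, f₂)` in
`R = R₁ ×_{R̄} R₂` with common image `f̄`, the localization `R_f` is isomorphic to
`(R₁)_{f₁} ×_{R̄_{f̄}} (R₂)_{f₂}`. -/
theorem stmt_10 {A B C : Type*} [CommRing A] [CommRing B] [CommRing C]
    (g1 : A →+* C) (g2 : B →+* C)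
    (hg1 : Function.Surjective g1) (hg2 : Function.Surjective g2)
    (f : ringFiberProduct g1 g2)
    (hf : g1 (f : A × B).1 = g2 (f : A × B).2) :
    Nonempty (Localization.Away f ≃+*
      ((Localization.awayMap g1 (f : A × B).1).comp
          (RingHom.fst (Localization.Away (f : A × B).1)
            (Localization.Away (f : A × B).2))).eqLocus
        (((hf.symm ▸ Localization.awayMap g2 (f : A × B).2 :
            Localization.Away (f : A × B).2 →+* Localization.Away (g1 (f : A × B).1))).comp
          (RingHom.snd (Localization.Away (f : A × B).1)
            (Localization.Away (f : A × B).2)))) := by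
  refine aux10 g1 g2 f (g1 (f : A × B).1) rfl hf.symm
    (Localization.awayMap g1 (f : A × B).1) _ ?_ ?_
  · intro a
    exact awayMap_algebraMap g1 _ a
  · intro b
    rw [cast_apply, awayMap_algebraMap, cast_algebraMap]
end

section
/- Let R1 → R̄ and R2 → R̄ be surjective ring homomorphisms, R = R1 ×_{R̄} R2, and 𝔪 ⊂ R an ideal with images 𝔪₁ ⊂ R1, 𝔪₂ ⊂ R2, 𝔪̄ ⊂ R̄ such that 𝔪 = 𝔪₁ ×_{𝔪̄} 𝔪₂. If 𝔪^k = 𝔪₁^k ×_{𝔪̄^k} 𝔪₂^k for all k ≥ 0, then R/𝔪^k ≅ R1/𝔪₁^k ×_{R̄/𝔪̄^k} R2/𝔪₂^k. -/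
/-- For surjections `g1 : R₁ → R̄`, `g2 : R₂ → R̄`, a ring `R` which is the fiber
product `R₁ ×_{R̄} R₂` (via projections `p1`, `p2`), an ideal `𝔪 ⊂ R` with images
`𝔪₁ = p1(𝔪)`, `𝔪₂ = p2(𝔪)`, `𝔪̄ = g1(𝔪₁) = g2(𝔪₂)`, if
`𝔪^k = 𝔪₁^k ×_{𝔪̄^k} 𝔪₂^k` then `R/𝔪^k ≅ R₁/𝔪₁^k ×_{R̄/𝔪̄^k} R₂/𝔪₂^k`. -/
theorem stmt_11 {R A B C : Type*} [CommRing R] [CommRing A] [CommRing B] [CommRing C]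
    (p1 : R →+* A) (p2 : R →+* B) (g1 : A →+* C) (g2 : B →+* C)
    (hg1 : Function.Surjective g1) (hg2 : Function.Surjective g2)
    (hcomm : ∀ x : R, g1 (p1 x) = g2 (p2 x))
    (hfib : ∀ (y : A) (z : B), g1 y = g2 z → ∃! x : R, p1 x = y ∧ p2 x = z)
    (m : Ideal R) (m1 : Ideal A) (m2 : Ideal B) (mb : Ideal C)
    (hm1 : m1 = Ideal.map p1 m) (hm2 : m2 = Ideal.map p2 m)
    (hmb1 : mb = Ideal.map g1 m1) (hmb2 : mb = Ideal.map g2 m2)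
    (k : ℕ)
    (hpow : ∀ x : R, x ∈ m ^ k ↔ p1 x ∈ m1 ^ k ∧ p2 x ∈ m2 ^ k) :
    Nonempty ((R ⧸ m ^ k) ≃+*
      ((Ideal.quotientMap (mb ^ k) g1
            (by rw [hmb1, ← Ideal.map_pow]; exact Ideal.le_comap_map)).comp
          (RingHom.fst (A ⧸ m1 ^ k) (B ⧸ m2 ^ k))).eqLocus
        ((Ideal.quotientMap (mb ^ k) g2
            (by rw [hmb2, ← Ideal.map_pow]; exact Ideal.le_comap_map)).comp
          (RingHom.snd (A ⧸ m1 ^ k) (B ⧸ m2 ^ k)))) := by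
  let q1 : (A ⧸ m1 ^ k) →+* C ⧸ mb ^ k := Ideal.quotientMap (mb ^ k) g1
      (by rw [hmb1, ← Ideal.map_pow]; exact Ideal.le_comap_map)
  let q2 : (B ⧸ m2 ^ k) →+* C ⧸ mb ^ k := Ideal.quotientMap (mb ^ k) g2
      (by rw [hmb2, ← Ideal.map_pow]; exact Ideal.le_comap_map)
  let S := (q1.comp (RingHom.fst (A ⧸ m1 ^ k) (B ⧸ m2 ^ k))).eqLocus
      (q2.comp (RingHom.snd (A ⧸ m1 ^ k) (B ⧸ m2 ^ k)))
  have hq1 : q1 = Ideal.quotientMap (mb ^ k) g1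
      (by rw [hmb1, ← Ideal.map_pow]; exact Ideal.le_comap_map) := rfl
  have hq2 : q2 = Ideal.quotientMap (mb ^ k) g2
      (by rw [hmb2, ← Ideal.map_pow]; exact Ideal.le_comap_map) := rfl
  -- the map φ : R → (A/m1^k) × (B/m2^k)
  let φ : R →+* (A ⧸ m1 ^ k) × (B ⧸ m2 ^ k) :=
    ((Ideal.Quotient.mk (m1 ^ k)).comp p1).prod ((Ideal.Quotient.mk (m2 ^ k)).comp p2)
  have hmem : ∀ x : R, φ x ∈ S := by
    intro x
    show q1 (Ideal.Quotient.mk _ (p1 x)) = q2 (Ideal.Quotient.mk _ (p2 x))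
    rw [hq1, hq2, Ideal.quotientMap_mk, Ideal.quotientMap_mk, hcomm]
  let ψ : R →+* S := φ.codRestrict S hmem
  have hker : RingHom.ker ψ = m ^ k := by
    ext x
    constructor
    · intro hx
      have : φ x = 0 := congrArg Subtype.val hx
      have h1 : (Ideal.Quotient.mk (m1 ^ k)) (p1 x) = 0 := congrArg Prod.fst this
      have h2 : (Ideal.Quotient.mk (m2 ^ k)) (p2 x) = 0 := congrArg Prod.snd this
      exact (hpow x).2 ⟨Ideal.Quotient.eq_zero_iff_mem.mp h1,
        Ideal.Quotient.eq_zero_iff_mem.mp h2⟩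
    · intro hx
      obtain ⟨h1, h2⟩ := (hpow x).1 hx
      apply Subtype.ext
      show φ x = 0
      exact Prod.ext (Ideal.Quotient.eq_zero_iff_mem.mpr h1)
        (Ideal.Quotient.eq_zero_iff_mem.mpr h2)
  have hsurj : Function.Surjective ψ := by
    rintro ⟨⟨a, b⟩, hab⟩
    obtain ⟨y, rfl⟩ := Ideal.Quotient.mk_surjective a
    obtain ⟨z, rfl⟩ := Ideal.Quotient.mk_surjective b
    have hab' : q1 (Ideal.Quotient.mk _ y) = q2 (Ideal.Quotient.mk _ z) := hab
    rw [hq1, hq2, Ideal.quotientMap_mk, Ideal.quotientMap_mk] at hab'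
    have hdiff : g1 y - g2 z ∈ mb ^ k := by
      rw [← Ideal.Quotient.eq_zero_iff_mem, map_sub, sub_eq_zero]
      exact hab'
    have hmb2k : mb ^ k = Ideal.map g2 (m2 ^ k) := by rw [hmb2, Ideal.map_pow]
    rw [hmb2k, Ideal.mem_map_iff_of_surjective g2 hg2] at hdiff
    obtain ⟨w, hw, hgw⟩ := hdiff
    have hglue : g1 y = g2 (z + w) := by rw [map_add, hgw]; ring
    obtain ⟨x, ⟨hx1, hx2⟩, -⟩ := hfib y (z + w) hglue
    refine ⟨x, Subtype.ext (Prod.ext ?_ ?_)⟩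
    · show (Ideal.Quotient.mk (m1 ^ k)) (p1 x) = _
      rw [hx1]
    · show (Ideal.Quotient.mk (m2 ^ k)) (p2 x) = _
      rw [hx2, map_add, Ideal.Quotient.eq_zero_iff_mem.mpr hw, add_zero]
  exact ⟨(Ideal.quotEquivOfEq hker.symm).trans
    (RingHom.quotientKerEquivOfSurjective hsurj)⟩
end

section
/- Let π1 : ℂ[[s1,…,sn]] → ℂ[[u1,…,u_{n−1}]] and π2 : ℂ[[t1,…,tn]] → ℂ[[u1,…,u_{n−1}]] be surjective local ℂ-algebra homomorphisms with π1(sᵢ) = uᵢ, π2(tᵢ) = uᵢ for i < n and π1(sₙ) = π2(tₙ) = 0. Then the fiber product ℂ[[s]] ×_{ℂ[[u]]} ℂ[[t]] is isomorphic as a ℂ-algebra to ℂ[[z1,…,z_{n+1}]]/(zₙ·z_{n+1}). -/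
open MvPowerSeries Finsupp

noncomputable section
namespace Stmt12

variable {R : Type*} [CommRing R] {σ τ : Type*}

/-- pull back an exponent along an embedding -/
def pb (j : τ ↪ σ) (e : σ →₀ ℕ) : τ →₀ ℕ :=
  Finsupp.comapDomain j e j.injective.injOn

@[simp] lemma pb_embDomain (j : τ ↪ σ) (d : τ →₀ ℕ) : pb j (embDomain j d) = d := by
  ext t; simp [pb, Finsupp.comapDomain_apply, Finsupp.embDomain_apply_self]

lemma embDomain_pb (j : τ ↪ σ) (e : σ →₀ ℕ) (h : ↑e.support ⊆ Set.range j) :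
    embDomain j (pb j e) = e :=
  Finsupp.embDomain_comapDomain h

lemma pb_add (j : τ ↪ σ) (a b : σ →₀ ℕ) : pb j (a + b) = pb j a + pb j b := by
  ext t; simp [pb, Finsupp.comapDomain_apply]

lemma support_subset_of_add_embDomain {j : τ ↪ σ} {a b : σ →₀ ℕ} {d : τ →₀ ℕ}
    (h : a + b = embDomain j d) : ↑a.support ⊆ Set.range j ∧ ↑b.support ⊆ Set.range j := by
  constructor <;> intro s hs <;> by_contra hr <;>
  · have h0 : (a + b) s = 0 := by rw [h]; exact Finsupp.embDomain_notin_range _ _ _ hr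
    simp only [Finsupp.add_apply, Nat.add_eq_zero] at h0
    simp only [Finset.mem_coe, Finsupp.mem_support_iff] at hs
    omega

/-- coefficient reindexing function underlying `cAlg` -/
def cFun (j : τ ↪ σ) (f : MvPowerSeries σ R) : MvPowerSeries τ R :=
  fun d => coeff (embDomain j d) f

@[simp] lemma coeff_cFun (j : τ ↪ σ) (f : MvPowerSeries σ R) (d : τ →₀ ℕ) :
    coeff d (cFun j f) = coeff (embDomain j d) f := rfl

lemma cFun_mul (j : τ ↪ σ) (f g : MvPowerSeries σ R) :
    cFun j (f * g) = cFun j f * cFun j g := by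
  classical
  ext d
  rw [coeff_cFun, coeff_mul, coeff_mul]
  refine Finset.sum_nbij' (fun p => (pb j p.1, pb j p.2))
    (fun p => (embDomain j p.1, embDomain j p.2)) ?_ ?_ ?_ ?_ ?_
  · intro p hp
    rw [Finset.HasAntidiagonal.mem_antidiagonal] at hp ⊢
    obtain ⟨h1, h2⟩ := support_subset_of_add_embDomain hp
    apply Finsupp.embDomain_injective j
    rw [Finsupp.embDomain_add, embDomain_pb _ _ h1, embDomain_pb _ _ h2, hp]
  · intro p hp
    rw [Finset.HasAntidiagonal.mem_antidiagonal] at hp ⊢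
    rw [← Finsupp.embDomain_add, hp]
  · intro p hp
    rw [Finset.HasAntidiagonal.mem_antidiagonal] at hp
    obtain ⟨h1, h2⟩ := support_subset_of_add_embDomain hp
    exact Prod.ext (embDomain_pb _ _ h1) (embDomain_pb _ _ h2)
  · intro p _; exact Prod.ext (pb_embDomain _ _) (pb_embDomain _ _)
  · intro p hp
    rw [Finset.HasAntidiagonal.mem_antidiagonal] at hp
    obtain ⟨h1, h2⟩ := support_subset_of_add_embDomain hp
    show coeff p.1 f * coeff p.2 g
        = coeff (embDomain j (pb j p.1)) f * coeff (embDomain j (pb j p.2)) g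
    rw [embDomain_pb _ _ h1, embDomain_pb _ _ h2]

lemma cFun_one (j : τ ↪ σ) : cFun j (1 : MvPowerSeries σ R) = 1 := by
  classical
  ext d
  rw [coeff_cFun]
  simp [coeff_one, Finsupp.embDomain_eq_zero]

/-- The algebra hom `R[[σ]] → R[[τ]]` sending `X (j t) ↦ X t` and `X s ↦ 0` for
`s` outside the range of `j`. -/
def cAlg (j : τ ↪ σ) : MvPowerSeries σ R →ₐ[R] MvPowerSeries τ R where
  toFun := cFun j
  map_one' := cFun_one j
  map_mul' := cFun_mul j
  map_zero' := rfl
  map_add' f g := by ext d; exact map_add (coeff _) f g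
  commutes' r := by
    classical
    ext d
    show coeff (embDomain j d) (algebraMap R _ r) = coeff d (algebraMap R _ r)
    simp [MvPowerSeries.algebraMap_apply, coeff_C, Finsupp.embDomain_eq_zero]

@[simp] lemma coeff_cAlg (j : τ ↪ σ) (f : MvPowerSeries σ R) (d : τ →₀ ℕ) :
    coeff d (cAlg j f) = coeff (embDomain j d) f := rfl

lemma cAlg_X_mem (j : τ ↪ σ) (t : τ) : (cAlg j (X (j t)) : MvPowerSeries τ R) = X t := by
  classical
  ext d
  rw [coeff_cAlg, coeff_X, coeff_X]
  have h : (embDomain j d = Finsupp.single (j t) 1) ↔ d = Finsupp.single t 1 := by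
    rw [show (Finsupp.single (j t) 1 : σ →₀ ℕ) = embDomain j (Finsupp.single t 1) from
      (Finsupp.embDomain_single j t 1).symm]
    exact Finsupp.embDomain_inj
  rw [if_congr h rfl rfl]

lemma cAlg_X_not_mem (j : τ ↪ σ) {s : σ} (hs : s ∉ Set.range j) :
    (cAlg j (X s) : MvPowerSeries τ R) = 0 := by
  classical
  ext d
  rw [coeff_cAlg, coeff_X, if_neg, map_zero]
  intro h
  have := DFunLike.congr_fun h s
  rw [Finsupp.embDomain_notin_range _ _ _ hs] at this
  simp at this

end Stmt12

namespace Stmt12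

open Finsupp

variable {R : Type*} [CommRing R] {σ : Type*}

lemma degree_add' (a b : σ →₀ ℕ) : degree (a + b) = degree a + degree b := by
  show (a + b).sum (fun _ n => n) = a.sum (fun _ n => n) + b.sum (fun _ n => n)
  exact Finsupp.sum_add_index' (fun _ => rfl) (fun _ _ _ => rfl)

lemma degree_mono {a b : σ →₀ ℕ} (h : a ≤ b) : degree a ≤ degree b := by
  obtain ⟨c, rfl⟩ := le_iff_exists_add.mp h
  rw [degree_add']; omega

lemma degree_single' (i : σ) : degree (Finsupp.single i 1) = 1 := by
  classical
  rw [degree_apply, Finsupp.support_single_ne_zero i one_ne_zero, Finset.sum_singleton,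
    Finsupp.single_eq_same]

lemma degree_embDomain {τ : Type*} (j : τ ↪ σ) (d : τ →₀ ℕ) :
    degree (embDomain j d) = degree d := by
  rw [degree_apply, degree_apply, Finsupp.support_embDomain, Finset.sum_map]
  exact Finset.sum_congr rfl fun t _ => Finsupp.embDomain_apply_self j d t

/-- The ideal of power series of order at least `n`. -/
def ordI (n : ℕ) : Ideal (MvPowerSeries σ R) where
  carrier := {f | ∀ e : σ →₀ ℕ, degree e < n → coeff e f = 0}
  add_mem' := fun hf hg e he => by
    rw [map_add, hf e he, hg e he, add_zero]
  zero_mem' := fun e _ => map_zero _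
  smul_mem' := fun c f hf e he => by
    classical
    show coeff e (c * f) = 0
    rw [coeff_mul]
    refine Finset.sum_eq_zero fun p hp => ?_
    rw [Finset.HasAntidiagonal.mem_antidiagonal] at hp
    have : p.2 ≤ e := hp ▸ le_add_self
    rw [hf p.2 (lt_of_le_of_lt (degree_mono this) he), mul_zero]

lemma mem_ordI {n : ℕ} {f : MvPowerSeries σ R} :
    f ∈ (ordI n : Ideal (MvPowerSeries σ R)) ↔ ∀ e, degree e < n → coeff e f = 0 :=
  Iff.rfl

lemma ordI_mul_ordI {a b : ℕ} {f g : MvPowerSeries σ R}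
    (hf : f ∈ (ordI a : Ideal (MvPowerSeries σ R))) (hg : g ∈ (ordI b : Ideal _)) :
    f * g ∈ (ordI (a + b) : Ideal (MvPowerSeries σ R)) := by
  classical
  intro e he
  rw [coeff_mul]
  refine Finset.sum_eq_zero fun p hp => ?_
  rw [Finset.HasAntidiagonal.mem_antidiagonal] at hp
  have hd : degree p.1 + degree p.2 < a + b := by rw [← degree_add', hp]; exact he
  rcases lt_or_ge (degree p.1) a with h | h
  · rw [hf p.1 h, zero_mul]
  · rw [hg p.2 (by omega), mul_zero]

/-- The ideal generated by the variables. -/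
def JI : Ideal (MvPowerSeries σ R) := Ideal.span (Set.range (X : σ → MvPowerSeries σ R))

lemma X_mem_JI (s : σ) : (X s : MvPowerSeries σ R) ∈ (JI : Ideal (MvPowerSeries σ R)) :=
  Ideal.subset_span ⟨s, rfl⟩

lemma X_mem_ordI_one (s : σ) : (X s : MvPowerSeries σ R) ∈ (ordI 1 : Ideal (MvPowerSeries σ R)) := by
  classical
  intro e he
  have : e = 0 := (degree_eq_zero_iff e).mp (by omega)
  subst this
  rw [coeff_X, if_neg]
  intro h
  have := DFunLike.congr_fun h s
  simp at this

lemma JI_le_ordI_one : (JI : Ideal (MvPowerSeries σ R)) ≤ ordI 1 := by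
  rw [JI, Ideal.span_le]
  rintro _ ⟨s, rfl⟩
  exact X_mem_ordI_one s

lemma JI_pow_le_ordI (n : ℕ) : (JI : Ideal (MvPowerSeries σ R)) ^ n ≤ ordI n := by
  induction n with
  | zero => intro f _ e he; omega
  | succ n ih =>
    rw [pow_succ]
    refine Ideal.mul_le.2 fun f hf g hg => ?_
    exact ordI_mul_ordI (ih hf) (JI_le_ordI_one hg)

end Stmt12

namespace Stmt12

open Finsupp

variable {R : Type*} [CommRing R]

lemma mem_JI_pow_of_ordI {k : ℕ} (n : ℕ) (f : MvPowerSeries (Fin k) R)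
    (hf : ∀ e, degree e < n → coeff e f = 0) :
    f ∈ (JI : Ideal (MvPowerSeries (Fin k) R)) ^ n := by
  classical
  induction n generalizing f with
  | zero => simp
  | succ n ih =>
    -- decompose f = ∑ i, X i * g i
    set g : Fin k → MvPowerSeries (Fin k) R := fun i =>
      fun e => if (∀ j', j' < i → e j' = 0) then coeff (e + Finsupp.single i 1) f else 0
      with hg
    have hcoeffg : ∀ i e, coeff e (g i)
        = if (∀ j', j' < i → e j' = 0) then coeff (e + Finsupp.single i 1) f else 0 :=
      fun i e => rfl
    have hdecomp : f = ∑ i : Fin k, X i * g i := by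
      ext e
      rw [map_sum]
      have hXg : ∀ i : Fin k, coeff e (X i * g i)
          = if Finsupp.single i 1 ≤ e then coeff (e - Finsupp.single i 1) (g i) else 0 := by
        intro i
        rw [show (X i : MvPowerSeries (Fin k) R) = monomial (Finsupp.single i 1) 1 from rfl,
          coeff_monomial_mul]
        split <;> simp
      by_cases he : e = 0
      · subst he
        rw [hf 0 (by simp)]
        refine (Finset.sum_eq_zero fun i _ => ?_).symm
        rw [hXg i, if_neg]
        intro hle
        have := hle i
        simp at this
      · have hsupp : e.support.Nonempty := Finsupp.support_nonempty_iff.mpr he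
        set i₀ := e.support.min' hsupp with hi₀
        have hi₀mem : i₀ ∈ e.support := e.support.min'_mem hsupp
        have hi₀pos : 1 ≤ e i₀ := Nat.one_le_iff_ne_zero.mpr (Finsupp.mem_support_iff.mp hi₀mem)
        rw [Finset.sum_eq_single i₀]
        · rw [hXg i₀, if_pos (Finsupp.single_le_iff.mpr hi₀pos), hcoeffg, if_pos, 
            tsub_add_cancel_of_le (Finsupp.single_le_iff.mpr hi₀pos)]
          intro j' hj'
          have hj'supp : j' ∉ e.support := fun hmem => absurd (e.support.min'_le j' hmem) (by omega)
          rw [Finsupp.tsub_apply]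
          have := Finsupp.notMem_support_iff.mp hj'supp
          omega
        · intro i _ hne
          rw [hXg i]
          split
          · next hle =>
            rw [hcoeffg, if_neg]
            intro hall
            have hi₀i : i₀ < i := by
              have : i ∈ e.support := Finsupp.mem_support_iff.mpr
                (by have := Finsupp.single_le_iff.mp hle; omega)
              rcases lt_or_eq_of_le (e.support.min'_le i this) with h | h
              · exact h
              · exact absurd h.symm hne
            have := hall i₀ hi₀i
            rw [Finsupp.tsub_apply, Finsupp.single_eq_of_ne (by omega)] at this
            omega
          · rfl
        · simp
      
    rw [hdecomp]
    refine Ideal.sum_mem _ fun i _ => ?_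
    rw [pow_succ, mul_comm (X i)]
    refine Ideal.mul_mem_mul (ih (g i) ?_) (X_mem_JI i)
    intro e he
    rw [hcoeffg]
    split
    · refine hf _ ?_
      rw [degree_add', degree_single']
      omega
    · rfl

/-- image of `JI^n` under an algebra hom sending variables into `JI`. -/
lemma map_mem_JI_pow {k l : ℕ}
    (π : MvPowerSeries (Fin k) R →ₐ[R] MvPowerSeries (Fin l) R)
    (hX : ∀ s, π (X s) ∈ (JI : Ideal (MvPowerSeries (Fin l) R)))
    {n : ℕ} {f : MvPowerSeries (Fin k) R}
    (hf : f ∈ (JI : Ideal (MvPowerSeries (Fin k) R)) ^ n) :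
    π f ∈ (JI : Ideal (MvPowerSeries (Fin l) R)) ^ n := by
  have hmap : Ideal.map π.toRingHom ((JI : Ideal (MvPowerSeries (Fin k) R)) ^ n)
      ≤ (JI : Ideal (MvPowerSeries (Fin l) R)) ^ n := by
    rw [Ideal.map_pow]
    refine Ideal.pow_right_mono ?_ n
    rw [JI, Ideal.map_span, Ideal.span_le]
    rintro x hx
    simp only [Set.mem_image, Set.mem_range, exists_exists_eq_and] at hx
    obtain ⟨s, rfl⟩ := hx
    exact hX s
  exact hmap (Ideal.mem_map_of_mem _ hf)

end Stmt12

namespace Stmt12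

open Finsupp

variable {R : Type*} [CommRing R]

lemma algHom_eq_of_X {k l : ℕ} (π ρ : MvPowerSeries (Fin k) R →ₐ[R] MvPowerSeries (Fin l) R)
    (hX : ∀ i, π (X i) = ρ (X i))
    (hJ1 : ∀ i, π (X i) ∈ (JI : Ideal (MvPowerSeries (Fin l) R)))
    (hJ2 : ∀ i, ρ (X i) ∈ (JI : Ideal (MvPowerSeries (Fin l) R))) : π = ρ := by
  classical
  refine AlgHom.ext fun f => ?_
  apply MvPowerSeries.ext
  intro d
  set n : ℕ := degree d + 1 with hn
  set bnd : Fin k →₀ ℕ := Finsupp.equivFunOnFinite.symm (fun _ => n) with hbnd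
  set S : Finset (Fin k →₀ ℕ) := (Finset.Iic bnd).filter (fun e => degree e < n) with hS
  set Q : MvPolynomial (Fin k) R := ∑ e ∈ S, MvPolynomial.monomial e (coeff e f) with hQ
  have hcoeAlg : ∀ (p : MvPolynomial (Fin k) R),
      (MvPolynomial.coeToMvPowerSeries.algHom R p : MvPowerSeries (Fin k) R) = ↑p := by
    intro p
    rw [MvPolynomial.coeToMvPowerSeries.algHom_apply, Algebra.algebraMap_self,
      MvPowerSeries.map_id]
    rfl
  have hπρQ : π ↑Q = ρ ↑Q := by
    have hcomp : π.comp (MvPolynomial.coeToMvPowerSeries.algHom R)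
        = ρ.comp (MvPolynomial.coeToMvPowerSeries.algHom R) := by
      refine MvPolynomial.algHom_ext fun i => ?_
      simp only [AlgHom.comp_apply, hcoeAlg, MvPolynomial.coe_X]
      exact hX i
    have := DFunLike.congr_fun hcomp Q
    simpa only [AlgHom.comp_apply, hcoeAlg] using this
  have hr : ∀ e, degree e < n → coeff e (f - (Q : MvPowerSeries (Fin k) R)) = 0 := by
    intro e he
    rw [map_sub, MvPolynomial.coeff_coe, hQ, MvPolynomial.coeff_sum]
    have hmem : e ∈ S := by
      rw [hS, Finset.mem_filter]
      refine ⟨Finset.mem_Iic.mpr ?_, he⟩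
      intro i
      calc e i ≤ degree e := le_degree i e
      _ ≤ bnd i := by
        rw [hbnd]
        simp only [Finsupp.coe_equivFunOnFinite_symm]
        omega
    rw [show (∑ e' ∈ S, MvPolynomial.coeff e (MvPolynomial.monomial e' (coeff e' f)))
        = ∑ e' ∈ S, if e' = e then coeff e' f else 0 from
        Finset.sum_congr rfl fun e' _ => MvPolynomial.coeff_monomial e e' _,
      Finset.sum_ite_eq' S e _, if_pos hmem, sub_self]
  have hrJ := mem_JI_pow_of_ordI n _ hr
  have hsplit : ∀ (θ : MvPowerSeries (Fin k) R →ₐ[R] MvPowerSeries (Fin l) R),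
      (∀ i, θ (X i) ∈ (JI : Ideal (MvPowerSeries (Fin l) R))) →
      coeff d (θ f) = coeff d (θ (Q : MvPowerSeries (Fin k) R)) := by
    intro θ hJ
    have h1 : θ f = θ (Q : MvPowerSeries (Fin k) R) + θ (f - (Q : MvPowerSeries (Fin k) R)) := by
      rw [← map_add]
      congr 1
      ring
    rw [h1, map_add, JI_pow_le_ordI n (map_mem_JI_pow θ hJ hrJ) d (by omega), add_zero]
  rw [hsplit π hJ1, hsplit ρ hJ2, hπρQ]

end Stmt12

namespace Stmt12

open Finsupp

variable {R : Type*} [CommRing R] {σ τ : Type*}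

open scoped Classical in
/-- extension of a power series along an embedding of variables (raw function) -/
def ext0 (j : τ ↪ σ) (f : MvPowerSeries τ R) : MvPowerSeries σ R :=
  fun e => if ↑e.support ⊆ Set.range j then coeff (pb j e) f else 0

open scoped Classical in
lemma ext0_apply (j : τ ↪ σ) (f : MvPowerSeries τ R) (e : σ →₀ ℕ) :
    coeff e (ext0 j f) = if ↑e.support ⊆ Set.range j then coeff (pb j e) f else 0 := rfl

lemma ext0_embDomain (j : τ ↪ σ) (f : MvPowerSeries τ R) (d : τ →₀ ℕ) :
    coeff (embDomain j d) (ext0 j f) = coeff d f := by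
  rw [ext0_apply, if_pos, pb_embDomain]
  rw [Finsupp.support_embDomain, Finset.coe_map]
  exact Set.image_subset_range _ _

lemma ext0_of_not (j : τ ↪ σ) (f : MvPowerSeries τ R) (e : σ →₀ ℕ)
    (h : ¬ ↑e.support ⊆ Set.range j) : coeff e (ext0 j f) = 0 := by
  rw [ext0_apply, if_neg h]

lemma embDomain_trans {α β γ M : Type*} [Zero M] (i : α ↪ β) (j : β ↪ γ) (d : α →₀ M) :
    embDomain j (embDomain i d) = embDomain (i.trans j) d := by
  ext s
  by_cases h1 : s ∈ Set.range (j : β → γ)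
  · obtain ⟨b, rfl⟩ := h1
    rw [Finsupp.embDomain_apply_self]
    by_cases h2 : b ∈ Set.range (i : α → β)
    · obtain ⟨a, rfl⟩ := h2
      rw [Finsupp.embDomain_apply_self, show j (i a) = (i.trans j) a from rfl,
        Finsupp.embDomain_apply_self]
    · rw [Finsupp.embDomain_notin_range _ _ _ h2, Finsupp.embDomain_notin_range]
      rintro ⟨a, ha⟩
      exact h2 ⟨a, j.injective ha⟩
  · rw [Finsupp.embDomain_notin_range _ _ _ h1, Finsupp.embDomain_notin_range]
    rintro ⟨a, ha⟩
    exact h1 ⟨i a, ha⟩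

section FinEmb

variable (m : ℕ)

def emb0 : Fin m ↪ Fin (m+1) := ⟨Fin.castSucc, Fin.castSucc_injective m⟩

def embJ1 : Fin (m+1) ↪ Fin (m+2) := ⟨Fin.castSucc, Fin.castSucc_injective (m+1)⟩

def embJ2 : Fin (m+1) ↪ Fin (m+2) :=
  ⟨fun i => if i.val < m then ⟨i.val, by omega⟩ else ⟨m+1, by simp⟩, by
    intro a b h
    have ha := a.isLt
    have hb := b.isLt
    dsimp only at h
    split_ifs at h <;> (rw [Fin.mk.injEq] at h; exact Fin.ext (by omega))⟩

lemma trans_eq : (emb0 m).trans (embJ1 m) = (emb0 m).trans (embJ2 m) := by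
  refine DFunLike.ext _ _ fun i => ?_
  simp only [Function.Embedding.trans_apply]
  show Fin.castSucc (Fin.castSucc i) = embJ2 m (Fin.castSucc i)
  have hi : (Fin.castSucc i).val < m := by simpa using i.isLt
  apply Fin.ext
  show i.val = ((if (Fin.castSucc i).val < m then (⟨(Fin.castSucc i).val, by omega⟩ : Fin (m+2))
    else ⟨m+1, by simp⟩)).val
  rw [if_pos hi]
  rfl

lemma mem_range_embJ1 {s : Fin (m+2)} (h : s.val ≤ m) : s ∈ Set.range (embJ1 m) :=
  ⟨⟨s.val, by omega⟩, Fin.ext (by simp [embJ1])⟩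

lemma not_mem_range_embJ1 : (⟨m+1, by simp⟩ : Fin (m+2)) ∉ Set.range (embJ1 m) := by
  rintro ⟨i, hi⟩
  have h := congrArg Fin.val hi
  simp only [embJ1, Function.Embedding.coeFn_mk, Fin.coe_castSucc] at h
  have := i.isLt
  omega

lemma mem_range_embJ2 {s : Fin (m+2)} (h : s.val ≠ m) : s ∈ Set.range (embJ2 m) := by
  by_cases hlt : s.val < m
  · exact ⟨⟨s.val, by omega⟩, Fin.ext (by
      show ((if s.val < m then (⟨s.val, by omega⟩ : Fin (m+2)) else ⟨m+1, by simp⟩)).val = s.val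
      rw [if_pos hlt])⟩
  · have hs : s.val = m + 1 := by have := s.isLt; omega
    refine ⟨⟨m, by simp⟩, Fin.ext ?_⟩
    show ((if m < m then (⟨m, by simp⟩ : Fin (m+2)) else ⟨m+1, by simp⟩)).val = s.val
    rw [if_neg (lt_irrefl m), hs]

lemma not_mem_range_embJ2 : (⟨m, by simp⟩ : Fin (m+2)) ∉ Set.range (embJ2 m) := by
  rintro ⟨i, hi⟩
  have h := congrArg Fin.val hi
  change ((if i.val < m then (⟨i.val, by omega⟩ : Fin (m+2)) else ⟨m+1, by simp⟩)).val = m at h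
  split_ifs at h <;> (dsimp only at h; omega)

lemma mem_range_emb0 {s : Fin (m+1)} (h : s ≠ Fin.last m) : s ∈ Set.range (emb0 m) :=
  ⟨⟨s.val, lt_of_le_of_ne (Nat.lt_succ_iff.mp s.isLt) fun hv => h (Fin.ext hv)⟩, Fin.ext rfl⟩

lemma not_mem_range_emb0 : Fin.last m ∉ Set.range (emb0 m) := by
  rintro ⟨i, hi⟩
  have h := congrArg Fin.val hi
  simp only [emb0, Function.Embedding.coeFn_mk, Fin.coe_castSucc, Fin.val_last] at h
  have := i.isLt
  omega

lemma embJ1_last : embJ1 m (Fin.last m) = ⟨m, by simp⟩ := Fin.ext rfl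

lemma embJ2_last : embJ2 m (Fin.last m) = ⟨m+1, by simp⟩ := by
  apply Fin.ext
  show ((if (Fin.last m).val < m then (⟨(Fin.last m).val, by omega⟩ : Fin (m+2))
      else ⟨m+1, by simp⟩)).val = m+1
  rw [if_neg (by simp)]

end FinEmb

end Stmt12

namespace Stmt12

lemma not_mem_range_trans_m (m : ℕ) :
    (⟨m, by simp⟩ : Fin (m+2)) ∉ Set.range ((emb0 m).trans (embJ1 m)) := by
  rintro ⟨i, hi⟩
  have h := congrArg Fin.val hi
  simp only [Function.Embedding.trans_apply, emb0, embJ1, Function.Embedding.coeFn_mk,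
    Fin.coe_castSucc] at h
  have := i.isLt
  omega

lemma not_mem_range_trans_m1 (m : ℕ) :
    (⟨m+1, by simp⟩ : Fin (m+2)) ∉ Set.range ((emb0 m).trans (embJ1 m)) := by
  rintro ⟨i, hi⟩
  have h := congrArg Fin.val hi
  simp only [Function.Embedding.trans_apply, emb0, embJ1, Function.Embedding.coeFn_mk,
    Fin.coe_castSucc] at h
  have := i.isLt
  omega

end Stmt12

open Stmt12

/-- Let `π1 : ℂ[[s₁,…,s_{m+1}]] → ℂ[[u₁,…,u_m]]` and `π2 : ℂ[[t₁,…,t_{m+1}]] → ℂ[[u₁,…,u_m]]`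
be surjective local ℂ-algebra homomorphisms with `π1(sᵢ) = π2(tᵢ) = uᵢ` for `i ≤ m` and
`π1(s_{m+1}) = π2(t_{m+1}) = 0`.  Then the fiber product
`ℂ[[s]] ×_{ℂ[[u]]} ℂ[[t]]` is isomorphic as a ℂ-algebra to
`ℂ[[z₁,…,z_{m+2}]]/(z_{m+1}·z_{m+2})`. -/
theorem stmt_12 (m : ℕ)
    (π1 π2 : MvPowerSeries (Fin (m + 1)) ℂ →ₐ[ℂ] MvPowerSeries (Fin m) ℂ)
    (hs1 : Function.Surjective π1) (hs2 : Function.Surjective π2)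
    (hl1 : IsLocalHom π1.toRingHom) (hl2 : IsLocalHom π2.toRingHom)
    (hx1 : ∀ i : Fin m, π1 (X i.castSucc) = X i)
    (hx2 : ∀ i : Fin m, π2 (X i.castSucc) = X i)
    (hlast1 : π1 (X (Fin.last m)) = 0) (hlast2 : π2 (X (Fin.last m)) = 0) :
    Nonempty
      ((AlgHom.equalizer
          (π1.comp (AlgHom.fst ℂ (MvPowerSeries (Fin (m + 1)) ℂ)
            (MvPowerSeries (Fin (m + 1)) ℂ)))
          (π2.comp (AlgHom.snd ℂ (MvPowerSeries (Fin (m + 1)) ℂ)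
            (MvPowerSeries (Fin (m + 1)) ℂ)))) ≃ₐ[ℂ]
        (MvPowerSeries (Fin (m + 2)) ℂ ⧸
          Ideal.span {(X (⟨m, by omega⟩ : Fin (m + 2)) : MvPowerSeries (Fin (m + 2)) ℂ) *
            X (⟨m + 1, by omega⟩ : Fin (m + 2))})) := by
  classical
  have hp : ∀ (π : MvPowerSeries (Fin (m + 1)) ℂ →ₐ[ℂ] MvPowerSeries (Fin m) ℂ),
      (∀ i : Fin m, π (X i.castSucc) = X i) → π (X (Fin.last m)) = 0 →
      π = cAlg (emb0 m) := by
    intro π hxi hxl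
    apply algHom_eq_of_X
    · intro i
      induction i using Fin.lastCases with
      | last => rw [hxl, cAlg_X_not_mem _ (not_mem_range_emb0 m)]
      | cast i =>
        rw [hxi i, show (Fin.castSucc i : Fin (m+1)) = emb0 m i from rfl, cAlg_X_mem]
    · intro i
      induction i using Fin.lastCases with
      | last => rw [hxl]; exact Ideal.zero_mem _
      | cast i => rw [hxi i]; exact X_mem_JI i
    · intro i
      induction i using Fin.lastCases with
      | last =>
        rw [cAlg_X_not_mem _ (not_mem_range_emb0 m)]
        exact Ideal.zero_mem _
      | cast i =>
        rw [show (Fin.castSucc i : Fin (m+1)) = emb0 m i from rfl, cAlg_X_mem]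
        exact X_mem_JI i
  have hπ1 : π1 = cAlg (emb0 m) := hp π1 hx1 hlast1
  have hπ2 : π2 = cAlg (emb0 m) := hp π2 hx2 hlast2
  subst hπ1
  subst hπ2
  -- the fiber product map
  have hmemE : ∀ h : MvPowerSeries (Fin (m+2)) ℂ,
      (((cAlg (embJ1 m)).prod (cAlg (embJ2 m))) h) ∈ AlgHom.equalizer
        ((cAlg (emb0 m)).comp (AlgHom.fst ℂ (MvPowerSeries (Fin (m + 1)) ℂ)
            (MvPowerSeries (Fin (m + 1)) ℂ)))
        ((cAlg (emb0 m)).comp (AlgHom.snd ℂ (MvPowerSeries (Fin (m + 1)) ℂ)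
            (MvPowerSeries (Fin (m + 1)) ℂ))) := by
    intro h
    rw [AlgHom.mem_equalizer]
    show cAlg (emb0 m) (cAlg (embJ1 m) h) = cAlg (emb0 m) (cAlg (embJ2 m) h)
    apply MvPowerSeries.ext
    intro d
    rw [coeff_cAlg, coeff_cAlg, coeff_cAlg, coeff_cAlg, embDomain_trans, embDomain_trans,
      trans_eq]
  set Φ : MvPowerSeries (Fin (m+2)) ℂ →ₐ[ℂ] _ :=
    AlgHom.codRestrict ((cAlg (embJ1 m)).prod (cAlg (embJ2 m))) _ hmemE with hΦ
  have hΦval : ∀ h, (Φ h : MvPowerSeries (Fin (m+1)) ℂ × MvPowerSeries (Fin (m+1)) ℂ)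
      = (cAlg (embJ1 m) h, cAlg (embJ2 m) h) := fun h => rfl
  -- surjectivity
  have hsurj : Function.Surjective Φ := by
    rintro ⟨⟨f, g⟩, hfg⟩
    rw [AlgHom.mem_equalizer] at hfg
    replace hfg : cAlg (emb0 m) f = cAlg (emb0 m) g := hfg
    refine ⟨ext0 (embJ1 m) f + ext0 (embJ2 m) g
      - ext0 ((emb0 m).trans (embJ1 m)) (cAlg (emb0 m) f), ?_⟩
    apply Subtype.ext
    rw [hΦval]
    have key : ∀ d : Fin (m+1) →₀ ℕ, d (Fin.last m) ≠ 0 ∨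
        ∃ d' : Fin m →₀ ℕ, Finsupp.embDomain (emb0 m) d' = d := by
      intro d
      by_cases hd : d (Fin.last m) = 0
      · refine Or.inr ⟨pb (emb0 m) d, embDomain_pb _ _ ?_⟩
        intro s hs
        apply mem_range_emb0
        rintro rfl
        exact (Finsupp.mem_support_iff.mp hs) hd
      · exact Or.inl hd
    refine Prod.ext ?_ ?_
    · show cAlg (embJ1 m) _ = f
      apply MvPowerSeries.ext
      intro d
      rw [coeff_cAlg, map_sub, map_add, ext0_embDomain]
      have h23 : coeff (Finsupp.embDomain (embJ1 m) d) (ext0 (embJ2 m) g)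
          = coeff (Finsupp.embDomain (embJ1 m) d)
              (ext0 ((emb0 m).trans (embJ1 m)) (cAlg (emb0 m) f)) := by
        rcases key d with hd | ⟨d', rfl⟩
        · rw [ext0_of_not, ext0_of_not]
          · intro hsub
            have hmem : (⟨m, by omega⟩ : Fin (m+2))
                ∈ (Finsupp.embDomain (embJ1 m) d).support := by
              rw [← embJ1_last, Finsupp.mem_support_iff, Finsupp.embDomain_apply_self]
              exact hd
            exact not_mem_range_trans_m m (hsub hmem)
          · intro hsub
            have hmem : (⟨m, by omega⟩ : Fin (m+2))
                ∈ (Finsupp.embDomain (embJ1 m) d).support := by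
              rw [← embJ1_last, Finsupp.mem_support_iff, Finsupp.embDomain_apply_self]
              exact hd
            exact not_mem_range_embJ2 m (hsub hmem)
        · rw [embDomain_trans, trans_eq, ← embDomain_trans, ext0_embDomain,
            embDomain_trans, ext0_embDomain]
          exact (congrArg (coeff d') hfg).symm
      rw [h23]
      ring
    · show cAlg (embJ2 m) _ = g
      apply MvPowerSeries.ext
      intro d
      rw [coeff_cAlg, map_sub, map_add]
      have hT2 : coeff (Finsupp.embDomain (embJ2 m) d) (ext0 (embJ2 m) g) = coeff d g :=
        ext0_embDomain _ _ _
      have h13 : coeff (Finsupp.embDomain (embJ2 m) d) (ext0 (embJ1 m) f)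
          = coeff (Finsupp.embDomain (embJ2 m) d)
              (ext0 ((emb0 m).trans (embJ1 m)) (cAlg (emb0 m) f)) := by
        rcases key d with hd | ⟨d', rfl⟩
        · rw [ext0_of_not, ext0_of_not]
          · intro hsub
            have hmem : (⟨m+1, by omega⟩ : Fin (m+2))
                ∈ (Finsupp.embDomain (embJ2 m) d).support := by
              rw [← embJ2_last, Finsupp.mem_support_iff, Finsupp.embDomain_apply_self]
              exact hd
            exact not_mem_range_trans_m1 m (hsub hmem)
          · intro hsub
            have hmem : (⟨m+1, by omega⟩ : Fin (m+2))
                ∈ (Finsupp.embDomain (embJ2 m) d).support := by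
              rw [← embJ2_last, Finsupp.mem_support_iff, Finsupp.embDomain_apply_self]
              exact hd
            exact not_mem_range_embJ1 m (hsub hmem)
        · rw [embDomain_trans, ← trans_eq, ← embDomain_trans, ext0_embDomain,
            embDomain_trans, ext0_embDomain]
          rw [coeff_cAlg]
      rw [hT2, h13]
      ring
  -- kernel
  have hker : RingHom.ker Φ = Ideal.span
      {(X (⟨m, by omega⟩ : Fin (m + 2)) : MvPowerSeries (Fin (m + 2)) ℂ) *
        X (⟨m + 1, by omega⟩ : Fin (m + 2))} := by
    apply le_antisymm
    · intro h hh
      rw [RingHom.mem_ker] at hh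
      have hv := congrArg Subtype.val hh
      rw [hΦval] at hv
      have h1 : cAlg (embJ1 m) h = 0 := congrArg Prod.fst hv
      have h2 : cAlg (embJ2 m) h = 0 := congrArg Prod.snd hv
      rw [Ideal.mem_span_singleton]
      refine ⟨(fun e => coeff (e + Finsupp.single ⟨m, by omega⟩ 1
        + Finsupp.single ⟨m+1, by omega⟩ 1) h : MvPowerSeries (Fin (m+2)) ℂ), ?_⟩
      have hXX : (X (⟨m, by omega⟩ : Fin (m+2)) * X (⟨m+1, by omega⟩ : Fin (m+2))
          : MvPowerSeries (Fin (m+2)) ℂ)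
          = monomial (Finsupp.single ⟨m, by omega⟩ 1 + Finsupp.single ⟨m+1, by omega⟩ 1) 1 := by
        rw [show (X (⟨m, by omega⟩ : Fin (m+2)) : MvPowerSeries (Fin (m+2)) ℂ)
            = monomial (Finsupp.single ⟨m, by omega⟩ 1) 1 from rfl,
          show (X (⟨m+1, by omega⟩ : Fin (m+2)) : MvPowerSeries (Fin (m+2)) ℂ)
            = monomial (Finsupp.single ⟨m+1, by omega⟩ 1) 1 from rfl,
          monomial_mul_monomial, one_mul]
      apply MvPowerSeries.ext
      intro e
      erw [hXX, coeff_monomial_mul]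
      split
      · next hle =>
        rw [one_mul]
        show coeff e h = coeff (e - _ + Finsupp.single ⟨m, by omega⟩ 1
          + Finsupp.single ⟨m+1, by omega⟩ 1) h
        rw [add_assoc, tsub_add_cancel_of_le hle]
      · next hle =>
        have hor : e ⟨m, by omega⟩ = 0 ∨ e ⟨m+1, by omega⟩ = 0 := by
          by_contra hcon
          push_neg at hcon
          apply hle
          rw [Finsupp.le_def]
          intro s
          rw [Finsupp.add_apply, Finsupp.single_apply, Finsupp.single_apply]
          by_cases hs1 : (⟨m, by omega⟩ : Fin (m+2)) = s
          · rw [← hs1]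
            rw [if_pos rfl, if_neg (by intro hc; rw [Fin.mk.injEq] at hc; omega)]
            simpa using Nat.one_le_iff_ne_zero.mpr hcon.1
          · rw [if_neg hs1]
            by_cases hs2 : (⟨m+1, by omega⟩ : Fin (m+2)) = s
            · rw [← hs2, if_pos rfl]
              simpa using Nat.one_le_iff_ne_zero.mpr hcon.2
            · rw [if_neg hs2]
              simp
        rcases hor with h0 | h0
        · have hsub : ↑e.support ⊆ Set.range (embJ2 m) := by
            intro s hs
            apply mem_range_embJ2
            intro hsm
            have hse : s = ⟨m, by omega⟩ := Fin.ext hsm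
            rw [hse] at hs
            exact (Finsupp.mem_support_iff.mp hs) h0
          have hz := congrArg (coeff (pb (embJ2 m) e)) h2
          rw [coeff_cAlg, embDomain_pb _ _ hsub, map_zero] at hz
          exact hz
        · have hsub : ↑e.support ⊆ Set.range (embJ1 m) := by
            intro s hs
            apply mem_range_embJ1
            have := s.isLt
            by_contra hsm
            have hse : s = ⟨m+1, by omega⟩ := Fin.ext (show s.val = m+1 by omega)
            rw [hse] at hs
            exact (Finsupp.mem_support_iff.mp hs) h0
          have hz := congrArg (coeff (pb (embJ1 m) e)) h1
          rw [coeff_cAlg, embDomain_pb _ _ hsub, map_zero] at hz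
          exact hz
    · rw [Ideal.span_le, Set.singleton_subset_iff, SetLike.mem_coe, RingHom.mem_ker]
      apply Subtype.ext
      rw [hΦval, map_mul, map_mul]
      have hz1 : cAlg (embJ1 m) (X (⟨m+1, by omega⟩ : Fin (m+2)) : MvPowerSeries (Fin (m+2)) ℂ)
          = 0 := cAlg_X_not_mem _ (not_mem_range_embJ1 m)
      have hz2 : cAlg (embJ2 m) (X (⟨m, by omega⟩ : Fin (m+2)) : MvPowerSeries (Fin (m+2)) ℂ)
          = 0 := cAlg_X_not_mem _ (not_mem_range_embJ2 m)
      rw [Prod.ext_iff]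
      constructor
      · show cAlg (embJ1 m) _ * cAlg (embJ1 m) _ = 0
        rw [hz1, mul_zero]
      · show cAlg (embJ2 m) _ * cAlg (embJ2 m) _ = 0
        rw [hz2, zero_mul]
  exact ⟨(Ideal.quotientKerAlgEquivOfSurjective hsurj).symm.trans
    (Ideal.quotientEquivAlgOfEq ℂ hker)⟩
end
end

section
/- Let a ≥ 1 and k ≥ 1 be integers satisfying 30a²+20a+2−k > 0, 45a²+4−3k > 0, and 4(90a²−15a+4)−27k > 0. Let l' = (30a²+20a+8−k)f + 6e + (3a+2)v in ℤ³ with bilinear form f·e = 1, v² = −20, f² = e² = 0, f·v = e·v = 0. Then l'² = 4(45a²+4−3k) > 0, and for every (x,y,z) ∈ ℤ³ with 2xy − 20z² + 2 = 0 and y ≥ 0 (the class d = xf+ye+zv of a (−2)-curve), one has l'·d > 0. -/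
/-- The intersection form of Pic S for Oguiso's quartic K3 surface (basis f, e, v):
f·e = 1, v·v = −20, all other products of basis vectors 0. -/
def oguisoForm (x y : Fin 3 → ℤ) : ℤ := x 0 * y 1 + x 1 * y 0 - 20 * (x 2 * y 2)

/-- Ampleness criterion for l' = (30a²+20a+8−k)f + 6e + (3a+2)v: l'² = 4(45a²+4−3k) > 0
and l'·d > 0 for the class d = xf + ye + zv of every (−2)-curve (d² = −2, y = f·d ≥ 0). -/
theorem stmt_16 (a k : ℤ) (ha : 1 ≤ a) (hk : 1 ≤ k)
    (h1 : 0 < 30 * a ^ 2 + 20 * a + 2 - k)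
    (h2 : 0 < 45 * a ^ 2 + 4 - 3 * k)
    (h3 : 0 < 4 * (90 * a ^ 2 - 15 * a + 4) - 27 * k) :
    oguisoForm ![30 * a ^ 2 + 20 * a + 8 - k, 6, 3 * a + 2]
        ![30 * a ^ 2 + 20 * a + 8 - k, 6, 3 * a + 2] = 4 * (45 * a ^ 2 + 4 - 3 * k) ∧
    0 < oguisoForm ![30 * a ^ 2 + 20 * a + 8 - k, 6, 3 * a + 2]
        ![30 * a ^ 2 + 20 * a + 8 - k, 6, 3 * a + 2] ∧
    ∀ x y z : ℤ, 2 * x * y - 20 * z ^ 2 + 2 = 0 → 0 ≤ y →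
      0 < oguisoForm ![30 * a ^ 2 + 20 * a + 8 - k, 6, 3 * a + 2] ![x, y, z] := by
  have heq : oguisoForm ![30 * a ^ 2 + 20 * a + 8 - k, 6, 3 * a + 2]
      ![30 * a ^ 2 + 20 * a + 8 - k, 6, 3 * a + 2] = 4 * (45 * a ^ 2 + 4 - 3 * k) := by
    simp [oguisoForm]; ring
  refine ⟨heq, by rw [heq]; positivity, ?_⟩
  intro x y z hd hy
  simp only [oguisoForm, Matrix.cons_val_zero, Matrix.cons_val_one, Matrix.head_cons,
    Matrix.cons_val_two, Matrix.tail_cons]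
  have hxy : x * y = 10 * z ^ 2 - 1 := by linarith
  rcases eq_or_ne z 0 with hz | hz
  · subst hz
    have hxy' : x * y = -1 := by simpa using hxy
    have hy1 : y = 1 := by
      have : IsUnit y := IsUnit.of_mul_eq_one (a := y) (-x) (by linarith)
      rcases Int.isUnit_iff.mp this with h | h
      · exact h
      · omega
    subst hy1
    have hx : x = -1 := by linarith [hxy']
    subst hx
    nlinarith
  · have hz2 : 1 ≤ z ^ 2 := by nlinarith [sq_nonneg z, Int.one_le_abs (by exact hz), sq_abs z]
    have hxypos : 0 < x * y := by nlinarith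
    have hy0 : y ≠ 0 := by rintro rfl; simp at hxypos
    have hy1 : 1 ≤ y := by omega
    have hx1 : 1 ≤ x := by nlinarith
    have hM : 0 < 30 * a ^ 2 + 20 * a + 8 - k := by linarith
    rcases le_or_gt z 0 with hzn | hzp
    · nlinarith [mul_le_mul_of_nonneg_left hzn (by linarith : (0:ℤ) ≤ 20 * (3 * a + 2)),
        mul_pos hM (show (0:ℤ) < y by omega)]
    · -- z ≥ 1
      have hz1 : 1 ≤ z := hzp
      set M := 30 * a ^ 2 + 20 * a + 8 - k with hMdef
      have hS : 0 < M * y + 6 * x - 20 * ((3 * a + 2) * z) := by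
        have hT : 0 < M * y + 6 * x + 20 * ((3 * a + 2) * z) := by
          have := mul_pos hM (show (0:ℤ) < y by omega)
          have := mul_pos (show (0:ℤ) < 20 * (3 * a + 2) by linarith) hzp
          nlinarith
        nlinarith [sq_nonneg (6 * x - M * y), sq_nonneg z,
          mul_le_mul_of_nonneg_left hz2 (le_of_lt h3)]
      linarith [hS]
end

section
/- Let A, B > 0 be real numbers. Then (A+B)² ≥ 4AB, i.e., the inequality [6x + Ky]² ≥ 24xKy holds for reals with 6x, Ky > 0 where K > 0; consequently, if xy = 10z² − 1, x,y > 0, z² ≥ 1, K = 30a²+20a+8−k > 0, 45a²+4−3k > 0, and 4(90a²−15a+4)−27k > 0 with a ≥ 1, then (6x + Ky)² − (20(3a+2)z)² > 0. -/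
/-- Real-number inequality chain from the ampleness proof: the AM–GM inequality
(A+B)² ≥ 4AB for positive reals, and the consequence
(6x + Ky)² − (20(3a+2)z)² > 0 when xy = 10z² − 1, x, y > 0, z² ≥ 1,
K = 30a²+20a+8−k > 0, 45a²+4−3k > 0 and 4(90a²−15a+4)−27k > 0 with a ≥ 1. -/
theorem stmt_18 :
    (∀ A B : ℝ, 0 < A → 0 < B → 4 * A * B ≤ (A + B) ^ 2) ∧
    (∀ x y z a k : ℝ, x * y = 10 * z ^ 2 - 1 → 0 < x → 0 < y → 1 ≤ z ^ 2 → 1 ≤ a →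
      0 < 30 * a ^ 2 + 20 * a + 8 - k →
      0 < 45 * a ^ 2 + 4 - 3 * k →
      0 < 4 * (90 * a ^ 2 - 15 * a + 4) - 27 * k →
      0 < (6 * x + (30 * a ^ 2 + 20 * a + 8 - k) * y) ^ 2 - (20 * (3 * a + 2) * z) ^ 2) := by
  constructor
  · intro A B hA hB; nlinarith [sq_nonneg (A - B)]
  · intro x y z a k hxy hx hy hz ha hK h1 h2
    nlinarith [sq_nonneg (6 * x - (30 * a ^ 2 + 20 * a + 8 - k) * y),
      mul_nonneg (sub_nonneg.mpr hz) h1.le, hz, ha]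
end
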